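/- arXiv:2509.01859 — 4 statements merged into one kernel-verified Lean document; each statement's English description precedes it below -/
import Mathlib

section
/- The ten unit vectors in ℍ² given by e₁, e₂, and (1/√2)(1, ±q) for q ∈ {1, i, j, k} form five mutually unbiased bases: vectors within each listed pair are orthogonal, and any two vectors from different pairs have squared inner product modulus equal to 1/2. -/
noncomputable section
open Quaternion Matrix

abbrev HQ := ℍ[ℝ]
def qi : HQ := ⟨0,1,0,0⟩
def qj : HQ := ⟨0,0,1,0⟩
def qk : HQ := ⟨0,0,0,1⟩
@[simp] lemma qi_re : qi.re = 0 := rfl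
@[simp] lemma qi_imI : qi.imI = 1 := rfl
@[simp] lemma qi_imJ : qi.imJ = 0 := rfl
@[simp] lemma qi_imK : qi.imK = 0 := rfl
@[simp] lemma qj_re : qj.re = 0 := rfl
@[simp] lemma qj_imI : qj.imI = 0 := rfl
@[simp] lemma qj_imJ : qj.imJ = 1 := rfl
@[simp] lemma qj_imK : qj.imK = 0 := rfl
@[simp] lemma qk_re : qk.re = 0 := rfl
@[simp] lemma qk_imI : qk.imI = 0 := rfl
@[simp] lemma qk_imJ : qk.imJ = 0 := rfl
@[simp] lemma qk_imK : qk.imK = 1 := rfl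

/-- Inner product on the right ℍ-module ℍ^d. -/
def inprod {d : ℕ} (v w : Fin d → HQ) : HQ := ∑ m, star (v m) * w m

/-- The five MUBs of ℍ²: each `mub p` is a pair of vectors. -/
def mub : Fin 5 → Fin 2 → (Fin 2 → HQ) :=
  ![![![1, 0], ![0, 1]],
    ![(Real.sqrt 2)⁻¹ • ![1, 1], (Real.sqrt 2)⁻¹ • ![1, -1]],
    ![(Real.sqrt 2)⁻¹ • ![1, qi], (Real.sqrt 2)⁻¹ • ![1, -qi]],
    ![(Real.sqrt 2)⁻¹ • ![1, qj], (Real.sqrt 2)⁻¹ • ![1, -qj]],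
    ![(Real.sqrt 2)⁻¹ • ![1, qk], (Real.sqrt 2)⁻¹ • ![1, -qk]]]

lemma sqrt2_inv_mul_self : (Real.sqrt 2)⁻¹ * (Real.sqrt 2)⁻¹ = 1/2 := by
  rw [← mul_inv, ← Real.sqrt_mul_self (by norm_num : (0:ℝ) ≤ 2)]; norm_num

set_option maxHeartbeats 4000000 in
/-- The ten unit vectors e₁, e₂, (1/√2)(1,±q), q ∈ {1,i,j,k}, form five
mutually unbiased bases of ℍ². -/
theorem five_quaternionic_MUBs :
    (∀ p : Fin 5, ∀ s : Fin 2, inprod (mub p s) (mub p s) = 1) ∧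
    (∀ p : Fin 5, inprod (mub p 0) (mub p 1) = 0) ∧
    (∀ p p' : Fin 5, p ≠ p' → ∀ s s' : Fin 2,
      Quaternion.normSq (inprod (mub p s) (mub p' s')) = 1 / 2) := by
  refine ⟨?_, ?_, ?_⟩
  · intro p s
    fin_cases p <;> fin_cases s <;>
      simp [mub, inprod, Fin.sum_univ_succ, Quaternion.ext_iff,
        sqrt2_inv_mul_self] <;> norm_num
  · intro p
    fin_cases p <;>
      simp [mub, inprod, Fin.sum_univ_succ, Quaternion.ext_iff,
        sqrt2_inv_mul_self] <;> norm_num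
  · intro p p' hne s s'
    fin_cases p <;> fin_cases p' <;> first | exact absurd rfl hne | (fin_cases s <;>
      fin_cases s' <;>
      simp [mub, inprod, Fin.sum_univ_succ, Quaternion.normSq_def',
        sqrt2_inv_mul_self] <;> norm_num)
end
end

section
/- For a unit quaternion b, the reflection r_{a,ξ} with root a = (1/√2)(1, −b⁻¹) ∈ ℍ² and unit quaternion scalar ξ ≠ 1 equals the 2×2 matrix (1/2)·[[1+ξ, (1−ξ)b], [b⁻¹(1−ξ), b⁻¹(1+ξ)b]], and this matrix is monomial (has exactly one nonzero entry in each row and column) if and only if ξ = −1, in which case it equals [[0, b], [b⁻¹, 0]]. -/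
noncomputable section
open Quaternion Matrix

/-- The reflection r_{a,ξ} = I − a(1−ξ)a*/⟨a,a⟩ as a matrix. -/
def reflM {d : ℕ} (a : Fin d → HQ) (ξ : HQ) : Matrix (Fin d) (Fin d) HQ :=
  1 - Matrix.of (fun m n => a m * (1 - ξ) * star (a n) * (inprod a a)⁻¹)

/-- A 2×2 matrix is monomial if each row and each column has exactly one
nonzero entry. -/
def IsMonomial (M : Matrix (Fin 2) (Fin 2) HQ) : Prop :=
  (∀ r : Fin 2, ∃! c : Fin 2, M r c ≠ 0) ∧ (∀ c : Fin 2, ∃! r : Fin 2, M r c ≠ 0)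

lemma binv (b : HQ) (hb : normSq b = 1) : b⁻¹ = star b := by
  rw [Quaternion.inv_def, hb]; simp

lemma refl_eq (b ξ : HQ) (hb : normSq b = 1) :
    reflM ((Real.sqrt 2)⁻¹ • ![1, -b⁻¹]) ξ =
      ((2 : ℝ)⁻¹ : HQ) • !![1 + ξ, (1 - ξ) * b; b⁻¹ * (1 - ξ), b⁻¹ * (1 + ξ) * b] := by
  have hb0 : b ≠ 0 := by rintro rfl; simp [normSq] at hb
  have hbi : b⁻¹ = star b := binv b hb
  have hsb : star b * b = 1 := by rw [Quaternion.star_mul_self, hb]; simp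
  have hbs : b * star b = 1 := by rw [← hbi, mul_inv_cancel₀ hb0]
  have hq : ((Real.sqrt 2)⁻¹ : ℝ) * (Real.sqrt 2)⁻¹ = 2⁻¹ := by
    rw [← mul_inv, Real.mul_self_sqrt (by norm_num)]
  have hip : inprod ((Real.sqrt 2)⁻¹ • ![1, -star b]) ((Real.sqrt 2)⁻¹ • ![1, -star b]) = 1 := by
    simp only [inprod, Fin.sum_univ_two, Pi.smul_apply, Matrix.cons_val_zero,
      Matrix.cons_val_one, Matrix.head_cons, Quaternion.star_smul, star_neg, star_star,
      star_one, starRingEnd_apply, smul_mul_smul_comm, hq, neg_mul, mul_neg, neg_neg,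
      one_mul, hbs, smul_eq_mul]
    module
  refine Matrix.ext fun i j => ?_
  fin_cases i <;> fin_cases j <;>
    simp only [reflM, hip, inv_one, mul_one, Matrix.sub_apply, Matrix.one_apply,
      Matrix.of_apply, Pi.smul_apply, Matrix.smul_apply, Matrix.cons_val_zero,
      Matrix.cons_val_one, Matrix.head_cons, Matrix.cons_val', Matrix.empty_val',
      Matrix.head_fin_const, Fin.mk_zero, Fin.mk_one, hbi, Quaternion.star_smul, star_neg,
      star_star, star_one, starRingEnd_apply, smul_mul_assoc, mul_smul_comm,
      smul_smul, hq, Quaternion.coe_mul_eq_smul, if_true, if_false, ne_eq,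
      reduceCtorEq, zero_ne_one, one_ne_zero, ite_true, ite_false, mul_one, one_mul,
      neg_mul, mul_neg, neg_neg, smul_neg, smul_eq_mul] <;>
    rw [← Quaternion.coe_inv, Quaternion.coe_mul_eq_smul] <;> try module
  rw [show star b * (1 - ξ) * b = 1 - star b * ξ * b by rw [mul_sub, mul_one, sub_mul, hsb],
      show star b * (1 + ξ) * b = 1 + star b * ξ * b by rw [mul_add, mul_one, add_mul, hsb]]
  module

/-- For a unit quaternion b, the reflection with root (1/√2)(1,−b⁻¹) and unit
scalar ξ ≠ 1 equals (1/2)[[1+ξ,(1−ξ)b],[b⁻¹(1−ξ),b⁻¹(1+ξ)b]]; it is monomial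
iff ξ = −1, in which case it equals [[0,b],[b⁻¹,0]]. -/
theorem reflection_of_MUB_root (b ξ : HQ) (hb : normSq b = 1)
    (hξ : normSq ξ = 1) (hξ1 : ξ ≠ 1) :
    reflM ((Real.sqrt 2)⁻¹ • ![1, -b⁻¹]) ξ =
      ((2 : ℝ)⁻¹ : HQ) • !![1 + ξ, (1 - ξ) * b; b⁻¹ * (1 - ξ), b⁻¹ * (1 + ξ) * b] ∧
    (IsMonomial (reflM ((Real.sqrt 2)⁻¹ • ![1, -b⁻¹]) ξ) ↔ ξ = -1) ∧
    reflM ((Real.sqrt 2)⁻¹ • ![1, -b⁻¹]) (-1) = !![0, b; b⁻¹, 0] := by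
  have hb0 : b ≠ 0 := by rintro rfl; simp [normSq] at hb
  have hb0' : b⁻¹ ≠ 0 := inv_ne_zero hb0
  have hc2 : ((2:ℝ) : HQ) ≠ 0 := by
    rw [ne_eq, ← Quaternion.coe_zero, Quaternion.coe_inj]; norm_num
  have h2 : ((2 : ℝ)⁻¹ : HQ) ≠ 0 := inv_ne_zero hc2
  have hneg : reflM ((Real.sqrt 2)⁻¹ • ![1, -b⁻¹]) (-1) = !![0, b; b⁻¹, 0] := by
    rw [refl_eq b (-1) hb]
    refine Matrix.ext fun i j => ?_
    have h2' : ((2 : ℝ)⁻¹ : HQ) * 2 = 1 := by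
      rw [show (2:HQ) = ((2:ℝ):HQ) by norm_cast]; exact inv_mul_cancel₀ hc2
    fin_cases i <;> fin_cases j <;>
      simp only [Matrix.smul_apply, Matrix.cons_val_zero, Matrix.cons_val_one,
        Matrix.head_cons, Matrix.cons_val', Matrix.empty_val', Matrix.head_fin_const,
        Fin.mk_zero, Fin.mk_one, smul_eq_mul, Matrix.of_apply, Fin.isValue] <;>
      [skip; rw [show (1:HQ) - -1 = 2 by norm_num, ← mul_assoc, h2', one_mul];
       rw [show (1:HQ) - -1 = 2 by norm_num, show b⁻¹ * 2 = 2 * b⁻¹ by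
          rw [show (2:HQ) = ((2:ℝ):HQ) by norm_cast, Quaternion.coe_commutes],
          ← mul_assoc, h2', one_mul]; skip] <;>
      · rw [show (1:HQ) + -1 = 0 by norm_num]; simp
  refine ⟨refl_eq b ξ hb, ⟨fun hm => ?_, fun hx => ?_⟩, hneg⟩
  · -- monomial → ξ = -1
    set M := reflM ((Real.sqrt 2)⁻¹ • ![1, -b⁻¹]) ξ with hM
    have heq := refl_eq b ξ hb
    have h01 : M 0 1 ≠ 0 := by
      rw [hM, heq]
      simp only [Matrix.smul_apply, Matrix.cons_val_one, Matrix.head_cons,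
        Matrix.cons_val', Matrix.cons_val_zero, Matrix.empty_val',
        Matrix.head_fin_const, smul_eq_mul, Matrix.of_apply]
      exact mul_ne_zero h2 (mul_ne_zero (sub_ne_zero.mpr (fun h => hξ1 h.symm)) hb0)
    obtain ⟨c, hc, hu⟩ := hm.1 0
    have hc1 : c = 1 := (hu 1 h01).symm
    subst hc1
    have h00 : M 0 0 = 0 := by
      by_contra h
      exact absurd (hu 0 h) (by decide)
    rw [hM, heq] at h00
    simp only [Matrix.smul_apply, Matrix.cons_val_zero, Matrix.cons_val',
      Matrix.empty_val', Matrix.head_fin_const, smul_eq_mul, Matrix.of_apply] at h00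
    have := (mul_eq_zero.mp h00).resolve_left h2
    exact eq_neg_of_add_eq_zero_right this
  · -- ξ = -1 → monomial
    rw [hx, hneg]
    constructor
    · intro r
      fin_cases r
      · exact ⟨1, by simpa using hb0, fun y hy => by fin_cases y <;> simp_all⟩
      · exact ⟨0, by simpa using hb0', fun y hy => by fin_cases y <;> simp_all⟩
    · intro c
      fin_cases c
      · exact ⟨1, by simpa using hb0', fun y hy => by fin_cases y <;> simp_all⟩
      · exact ⟨0, by simpa using hb0, fun y hy => by fin_cases y <;> simp_all⟩
end
end

section
/- The group K of order 32 consisting of the matrices diag(q, ±q) and antidiag(q, ±q) for q ∈ Q₈ is generated by any four of the five reflections [[−1,0],[0,1]], [[0,1],[1,0]], [[0,i],[−i,0]], [[0,j],[−j,0]], [[0,k],[−k,0]]. -/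
noncomputable section
open Quaternion Matrix

/-- The quaternion group Q₈ = {±1, ±i, ±j, ±k}. -/
def Q8 : Set HQ := {1, -1, qi, -qi, qj, -qj, qk, -qk}

/-- The five generating reflections of the group K. -/
def Kgen : Fin 5 → Matrix (Fin 2) (Fin 2) HQ :=
  ![!![-1, 0; 0, 1], !![0, 1; 1, 0], !![0, qi; -qi, 0],
    !![0, qj; -qj, 0], !![0, qk; -qk, 0]]

/-- The group K of the 32 matrices diag(q,±q), antidiag(q,±q), q ∈ Q₈. -/
def Kset : Set (Matrix (Fin 2) (Fin 2) HQ) :=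
  {M | ∃ q ∈ Q8, M = !![q, 0; 0, q] ∨ M = !![q, 0; 0, -q] ∨
    M = !![0, q; q, 0] ∨ M = !![0, q; -q, 0]}

/- Quaternion multiplication table. -/
@[simp] lemma qii : qi * qi = -1 := by ext <;> simp [Quaternion.re_mul, Quaternion.imI_mul, Quaternion.imJ_mul, Quaternion.imK_mul] <;> simp [qi]
@[simp] lemma qjj : qj * qj = -1 := by ext <;> simp [Quaternion.re_mul, Quaternion.imI_mul, Quaternion.imJ_mul, Quaternion.imK_mul] <;> simp [qj]
@[simp] lemma qkk : qk * qk = -1 := by ext <;> simp [Quaternion.re_mul, Quaternion.imI_mul, Quaternion.imJ_mul, Quaternion.imK_mul] <;> simp [qk]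
@[simp] lemma qij : qi * qj = qk := by ext <;> simp [Quaternion.re_mul, Quaternion.imI_mul, Quaternion.imJ_mul, Quaternion.imK_mul] <;> simp [qi,qj,qk]
@[simp] lemma qji : qj * qi = -qk := by ext <;> simp [Quaternion.re_mul, Quaternion.imI_mul, Quaternion.imJ_mul, Quaternion.imK_mul] <;> simp [qi,qj,qk]
@[simp] lemma qjk : qj * qk = qi := by ext <;> simp [Quaternion.re_mul, Quaternion.imI_mul, Quaternion.imJ_mul, Quaternion.imK_mul] <;> simp [qi,qj,qk]
@[simp] lemma qkj : qk * qj = -qi := by ext <;> simp [Quaternion.re_mul, Quaternion.imI_mul, Quaternion.imJ_mul, Quaternion.imK_mul] <;> simp [qi,qj,qk]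
@[simp] lemma qki : qk * qi = qj := by ext <;> simp [Quaternion.re_mul, Quaternion.imI_mul, Quaternion.imJ_mul, Quaternion.imK_mul] <;> simp [qi,qj,qk]
@[simp] lemma qik : qi * qk = -qj := by ext <;> simp [Quaternion.re_mul, Quaternion.imI_mul, Quaternion.imJ_mul, Quaternion.imK_mul] <;> simp [qi,qj,qk]

lemma Q8_mul {a b : HQ} (ha : a ∈ Q8) (hb : b ∈ Q8) : a * b ∈ Q8 := by
  simp only [Q8, Set.mem_insert_iff, Set.mem_singleton_iff] at *
  rcases ha with rfl|rfl|rfl|rfl|rfl|rfl|rfl|rfl <;>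
    rcases hb with rfl|rfl|rfl|rfl|rfl|rfl|rfl|rfl <;>
      simp

lemma Q8_neg {a : HQ} (ha : a ∈ Q8) : -a ∈ Q8 := by
  simp only [Q8, Set.mem_insert_iff, Set.mem_singleton_iff] at *
  rcases ha with rfl|rfl|rfl|rfl|rfl|rfl|rfl|rfl <;> simp

/-- Kset as a submonoid. -/
def Kmonoid : Submonoid (Matrix (Fin 2) (Fin 2) HQ) where
  carrier := Kset
  one_mem' := ⟨1, by simp [Q8], Or.inl (by rw [Matrix.one_fin_two])⟩
  mul_mem' := by
    rintro M N ⟨q, hq, hM⟩ ⟨r, hr, hN⟩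
    rcases hM with rfl|rfl|rfl|rfl <;> rcases hN with rfl|rfl|rfl|rfl <;>
      first
        | (refine ⟨q*r, Q8_mul hq hr, ?_⟩; simp [Matrix.mul_fin_two]; done)
        | (refine ⟨-(q*r), Q8_neg (Q8_mul hq hr), ?_⟩; simp [Matrix.mul_fin_two]; done)

lemma Kgen_mem (s : Fin 5) : Kgen s ∈ Kset := by
  fin_cases s
  · exact ⟨-1, by simp [Q8], Or.inr (Or.inl (by simp [Kgen]))⟩
  · exact ⟨1, by simp [Q8], Or.inr (Or.inr (Or.inl (by simp [Kgen])))⟩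
  · exact ⟨qi, by simp [Q8], Or.inr (Or.inr (Or.inr (by simp [Kgen])))⟩
  · exact ⟨qj, by simp [Q8], Or.inr (Or.inr (Or.inr (by simp [Kgen])))⟩
  · exact ⟨qk, by simp [Q8], Or.inr (Or.inr (Or.inr (by simp [Kgen])))⟩

/-- Any submonoid containing all five generators contains Kset. -/
lemma Kset_subset (S : Submonoid (Matrix (Fin 2) (Fin 2) HQ))
    (h : ∀ s, Kgen s ∈ S) : Kset ⊆ (S : Set _) := by
  -- scalar diagonal matrices
  have h1 : !![(1:HQ),0;0,1] ∈ S := by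
    rw [← Matrix.one_fin_two]; exact S.one_mem
  have hm1 : !![(-1:HQ),0;0,-1] ∈ S := by
    have e : Kgen 1 * Kgen 2 * (Kgen 1 * Kgen 2) = !![(-1:HQ),0;0,-1] := by
      simp [Kgen, Matrix.mul_fin_two]
    exact e ▸ mul_mem (mul_mem (h 1) (h 2)) (mul_mem (h 1) (h 2))
  have hi : !![qi,0;0,qi] ∈ S := by
    have e : Kgen 0 * Kgen 1 * Kgen 2 = !![qi,0;0,qi] := by
      simp [Kgen, Matrix.mul_fin_two]
    exact e ▸ mul_mem (mul_mem (h 0) (h 1)) (h 2)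
  have hj : !![qj,0;0,qj] ∈ S := by
    have e : Kgen 0 * Kgen 1 * Kgen 3 = !![qj,0;0,qj] := by
      simp [Kgen, Matrix.mul_fin_two]
    exact e ▸ mul_mem (mul_mem (h 0) (h 1)) (h 3)
  have hk : !![qk,0;0,qk] ∈ S := by
    have e : Kgen 0 * Kgen 1 * Kgen 4 = !![qk,0;0,qk] := by
      simp [Kgen, Matrix.mul_fin_two]
    exact e ▸ mul_mem (mul_mem (h 0) (h 1)) (h 4)
  have hneg : ∀ q : HQ, !![q,0;0,q] ∈ S → !![-q,0;0,-q] ∈ S := by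
    intro q hq
    have e : !![q,0;0,q] * !![(-1:HQ),0;0,-1] = !![-q,0;0,-q] := by
      simp [Matrix.mul_fin_two]
    exact e ▸ mul_mem hq hm1
  have hD1 : ∀ q ∈ Q8, !![q,0;0,q] ∈ S := by
    intro q hq
    simp only [Q8, Set.mem_insert_iff, Set.mem_singleton_iff] at hq
    rcases hq with rfl|rfl|rfl|rfl|rfl|rfl|rfl|rfl
    · exact h1
    · exact hm1
    · exact hi
    · exact hneg _ hi
    · exact hj
    · exact hneg _ hj
    · exact hk
    · exact hneg _ hk
  have hD2 : ∀ q ∈ Q8, !![q,0;0,-q] ∈ S := by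
    intro q hq
    have e : Kgen 0 * !![-q,0;0,-q] = !![q,0;0,-q] := by
      simp [Kgen, Matrix.mul_fin_two]
    exact e ▸ mul_mem (h 0) (hD1 _ (Q8_neg hq))
  have hA1 : ∀ q ∈ Q8, !![0,q;q,0] ∈ S := by
    intro q hq
    have e : !![q,0;0,q] * Kgen 1 = !![0,q;q,0] := by
      simp [Kgen, Matrix.mul_fin_two]
    exact e ▸ mul_mem (hD1 _ hq) (h 1)
  have hA2 : ∀ q ∈ Q8, !![0,q;-q,0] ∈ S := by
    intro q hq
    have e : !![q,0;0,-q] * Kgen 1 = !![0,q;-q,0] := by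
      simp [Kgen, Matrix.mul_fin_two]
    exact e ▸ mul_mem (hD2 _ hq) (h 1)
  rintro M ⟨q, hq, rfl|rfl|rfl|rfl⟩
  · exact hD1 _ hq
  · exact hD2 _ hq
  · exact hA1 _ hq
  · exact hA2 _ hq

/-- K is generated by any four of the five reflections. -/
theorem K_generated_by_any_four (m : Fin 5) :
    (Submonoid.closure (Kgen '' {s | s ≠ m}) :
      Set (Matrix (Fin 2) (Fin 2) HQ)) = Kset := by
  set S := Submonoid.closure (Kgen '' {s | s ≠ m}) with hS
  have hsub : ∀ s, s ≠ m → Kgen s ∈ S := fun s hs =>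
    Submonoid.subset_closure ⟨s, hs, rfl⟩
  have hall : ∀ s, Kgen s ∈ S := by
    intro s
    by_cases hs : s = m
    · subst hs
      fin_cases s
      · have e : Kgen 1 * Kgen 2 * Kgen 3 * Kgen 4 = Kgen 0 := by
          simp [Kgen, Matrix.mul_fin_two]
        exact e ▸ mul_mem (mul_mem (mul_mem (hsub 1 (by decide))
          (hsub 2 (by decide))) (hsub 3 (by decide))) (hsub 4 (by decide))
      · have e : Kgen 2 * Kgen 3 * Kgen 4 * Kgen 0 = Kgen 1 := by
          simp [Kgen, Matrix.mul_fin_two]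
        exact e ▸ mul_mem (mul_mem (mul_mem (hsub 2 (by decide))
          (hsub 3 (by decide))) (hsub 4 (by decide))) (hsub 0 (by decide))
      · have e : Kgen 0 * Kgen 3 * Kgen 4 * Kgen 1 = Kgen 2 := by
          simp [Kgen, Matrix.mul_fin_two]
        exact e ▸ mul_mem (mul_mem (mul_mem (hsub 0 (by decide))
          (hsub 3 (by decide))) (hsub 4 (by decide))) (hsub 1 (by decide))
      · have e : Kgen 0 * Kgen 4 * Kgen 2 * Kgen 1 = Kgen 3 := by
          simp [Kgen, Matrix.mul_fin_two]
        exact e ▸ mul_mem (mul_mem (mul_mem (hsub 0 (by decide))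
          (hsub 4 (by decide))) (hsub 2 (by decide))) (hsub 1 (by decide))
      · have e : Kgen 0 * Kgen 2 * Kgen 3 * Kgen 1 = Kgen 4 := by
          simp [Kgen, Matrix.mul_fin_two]
        exact e ▸ mul_mem (mul_mem (mul_mem (hsub 0 (by decide))
          (hsub 2 (by decide))) (hsub 3 (by decide))) (hsub 1 (by decide))
    · exact hsub s hs
  apply Set.Subset.antisymm
  · intro x hx
    have : S ≤ Kmonoid := Submonoid.closure_le.mpr (by
      rintro y ⟨s, -, rfl⟩; exact Kgen_mem s)
    exact this hx
  · exact Kset_subset S hall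
end
end

section
/- The kernel of the action of the group P₃ on the ten MUB lines is {I, −I}; that is, g ∈ P₃ fixes each of the ten MUB lines (as a line) if and only if g = I or g = −I. -/
noncomputable section
open Quaternion Matrix

/-- The ten MUB vectors (1,0), (0,1), (1,q) for q ∈ {±1,±i,±j,±k}. -/
def mubVec : Fin 10 → (Fin 2 → HQ) :=
  ![![1, 0], ![0, 1], ![1, 1], ![1, -1], ![1, qi], ![1, -qi],
    ![1, qj], ![1, -qj], ![1, qk], ![1, -qk]]

set_option maxHeartbeats 2000000 in
/-- Every element of P₃ is unitary. -/
lemma P3_unitary : ∀ g ∈ Submonoid.closure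
      {(!![qi, 0; 0, 1] : Matrix (Fin 2) (Fin 2) HQ), !![qj, 0; 0, 1],
       (((Real.sqrt 2)⁻¹ : ℝ) : HQ) • !![1, 1; 1, -1]},
      g ∈ unitary (Matrix (Fin 2) (Fin 2) HQ) := by
  have h2 : ((Real.sqrt 2)⁻¹ : ℝ) * (Real.sqrt 2)⁻¹ = 1/2 := by
    rw [← mul_inv, ← Real.sqrt_mul_self (by norm_num : (0:ℝ) ≤ 2)]; norm_num
  have hc : ((Real.sqrt 2 : HQ))⁻¹.re = (Real.sqrt 2)⁻¹ ∧ ((Real.sqrt 2 : HQ))⁻¹.imI = 0 ∧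
      ((Real.sqrt 2 : HQ))⁻¹.imJ = 0 ∧ ((Real.sqrt 2 : HQ))⁻¹.imK = 0 := by
    rw [← Quaternion.coe_inv]; exact ⟨rfl, rfl, rfl, rfl⟩
  have e1 : (2:HQ).re = 2 := rfl
  have e2 : (2:HQ).imI = 0 := rfl
  have e3 : (2:HQ).imJ = 0 := rfl
  have e4 : (2:HQ).imK = 0 := rfl
  intro g hg
  refine Submonoid.closure_le.mpr ?_ hg
  rintro x (rfl | rfl | rfl) <;>
  · constructor <;>
    · ext i j
      all_goals fin_cases i <;> fin_cases j <;>
        simp [Matrix.mul_apply, Fin.sum_univ_two, Matrix.star_eq_conjTranspose,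
          Matrix.conjTranspose_apply, Quaternion.ext_iff, Matrix.one_apply,
          Matrix.smul_apply, hc, e1, e2, e3, e4, h2] <;> linarith [h2]

/-- The kernel of the action of P₃ on the ten MUB lines is {I, −I}:
g ∈ P₃ fixes each of the ten MUB lines iff g = I or g = −I. -/
theorem kernel_of_P3_action_on_MUB_lines :
    ∀ g ∈ Submonoid.closure
      {(!![qi, 0; 0, 1] : Matrix (Fin 2) (Fin 2) HQ), !![qj, 0; 0, 1],
       (((Real.sqrt 2)⁻¹ : ℝ) : HQ) • !![1, 1; 1, -1]},
      ((∀ a : Fin 10, ∃ lam : HQ,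
          g.mulVec (mubVec a) = fun m => mubVec a m * lam) ↔
        (g = 1 ∨ g = -1)) := by
  intro g hg
  constructor
  · intro h
    -- extract entry information from the fixed lines
    obtain ⟨l0, h0⟩ := h 0
    obtain ⟨l1, h1⟩ := h 1
    obtain ⟨l2, h2⟩ := h 2
    obtain ⟨l4, h4⟩ := h 4
    obtain ⟨l6, h6⟩ := h 6
    rw [show mubVec 0 = ![1,0] from rfl] at h0
    rw [show mubVec 1 = ![0,1] from rfl] at h1
    rw [show mubVec 2 = ![1,1] from rfl] at h2
    rw [show mubVec 4 = ![1,qi] from rfl] at h4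
    rw [show mubVec 6 = ![1,qj] from rfl] at h6
    have h00 := congrFun h0 0; have h01 := congrFun h0 1
    have h10 := congrFun h1 0; have h11 := congrFun h1 1
    have h20 := congrFun h2 0; have h21 := congrFun h2 1
    have h40 := congrFun h4 0; have h41 := congrFun h4 1
    have h60 := congrFun h6 0; have h61 := congrFun h6 1
    simp [Matrix.mulVec, dotProduct, Fin.sum_univ_two]
      at h00 h01 h10 h11 h20 h21 h40 h41 h60 h61
    -- g is diagonal with equal diagonal entries
    have hd : g 0 0 = g 1 1 := by
      have := h20.trans h21.symm
      rw [h01, h10] at this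
      simpa using this
    have hci : g 0 0 * qi = qi * g 0 0 := by
      rw [h10] at h40; simp at h40
      rw [h01, ← hd, ← h40] at h41
      simpa using h41
    have hcj : g 0 0 * qj = qj * g 0 0 := by
      rw [h10] at h60; simp at h60
      rw [h01, ← hd, ← h60] at h61
      simpa using h61
    -- the diagonal entry is real
    have hreal : g 0 0 = ((g 0 0).re : HQ) := by
      have hi := hci; have hj := hcj
      simp [Quaternion.ext_iff] at hi hj
      simp [Quaternion.ext_iff]
      exact ⟨by linarith [hj.2], by linarith [hi.2], by linarith [hi.1]⟩
    -- unitarity gives (g 0 0)² = 1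
    have hu := (P3_unitary g hg).1
    have hu00 := congrFun (congrFun hu 0) 0
    simp [Matrix.mul_apply, Fin.sum_univ_two, Matrix.star_eq_conjTranspose,
      Matrix.conjTranspose_apply, Matrix.one_apply, h01] at hu00
    set w : ℝ := (g 0 0).re with hw
    have hsq : w * w = 1 := by
      rw [hreal] at hu00
      have : ((w * w : ℝ) : HQ) = ((1:ℝ) : HQ) := by
        simpa [← Quaternion.coe_mul] using hu00
      exact Quaternion.coe_injective this
    rcases mul_self_eq_one_iff.mp hsq with hw1 | hw1
    · left
      have hg1 : g 0 0 = 1 := by rw [hreal, hw1]; simp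
      ext i j
      all_goals fin_cases i <;> fin_cases j <;>
        simp [Matrix.one_apply, h01, h10, ← hd, hg1]
    · right
      have hg1 : g 0 0 = -1 := by rw [hreal, hw1]; simp
      ext i j
      all_goals fin_cases i <;> fin_cases j <;>
        simp [Matrix.one_apply, h01, h10, ← hd, hg1]
  · rintro (rfl | rfl) <;> intro a
    · exact ⟨1, by simp [Matrix.one_mulVec]⟩
    · exact ⟨-1, by funext m; simp [Matrix.neg_mulVec, Matrix.one_mulVec]⟩
end
end
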